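/- arXiv:2509.23120 — 2 statements merged into one kernel-verified Lean document; each statement's English description precedes it below -/
import Mathlib

section
/- For every p ≥ 1, every β > 0, every finite Λ ⊂ ℤ², every contour γ with Λ_γ ⊆ Λ and every h ∈ ℤ, the p-SOS Gibbs measure with zero boundary condition and no floor satisfies hatπ^{p,0}_Λ(C_{γ,h}) ≤ exp(−β|γ|). -/
open scoped BigOperators Classical

noncomputable section

namespace PSOS

/-- Sites of the square lattice `ℤ²`. -/
abbrev Site : Type := ℤ × ℤ

/-- The nearest-neighbour edges incident to `x`, each written in its normalized
(right/up oriented) form, so that every unordered pair appears in a unique way. -/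
def edgesAt (x : Site) : Finset (Site × Site) :=
  {(x, (x.1 + 1, x.2)), (x, (x.1, x.2 + 1)),
   ((x.1 - 1, x.2), x), ((x.1, x.2 - 1), x)}

/-- Nearest-neighbour edges of `ℤ²` with at least one endpoint in `Λ`,
each unordered pair appearing exactly once. -/
def edges (Λ : Finset Site) : Finset (Site × Site) := Λ.biUnion edgesAt

/-- Extension `ξ` of a configuration `η : Λ → ℤ` by the boundary condition `φ` off `Λ`. -/
def extend (Λ : Finset Site) (φ : Site → ℤ) (η : Λ → ℤ) : Site → ℤ :=
  fun x => if h : x ∈ Λ then η ⟨x, h⟩ else φ x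

/-- The `p`-SOS Hamiltonian `H^{p,φ}_Λ` on `Λ` with boundary condition `φ`. -/
def ham (p : ℝ) (Λ : Finset Site) (φ : Site → ℤ) (η : Λ → ℤ) : ℝ :=
  ∑ e ∈ edges Λ, (|extend Λ φ η e.1 - extend Λ φ η e.2| : ℝ) ^ p

/-- Boltzmann weight `exp(-β H^{p,φ}_Λ(η))`. -/
def weight (p β : ℝ) (Λ : Finset Site) (φ : Site → ℤ) (η : Λ → ℤ) : ℝ :=
  Real.exp (-β * ham p Λ φ η)

/-- Finite-volume Gibbs probability `hatπ^{p,φ}_Λ(A)` of an event `A ⊆ ℤ^Λ`. -/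
def gibbs (p β : ℝ) (Λ : Finset Site) (φ : Site → ℤ) (A : Set (Λ → ℤ)) : ℝ :=
  (∑' η : A, weight p β Λ φ η) / (∑' η : (Λ → ℤ), weight p β Λ φ η)

/-- Gibbs expectation of an observable under `hatπ^{p,φ}_Λ`. -/
def gibbsExp (p β : ℝ) (Λ : Finset Site) (φ : Site → ℤ) (f : (Λ → ℤ) → ℝ) : ℝ :=
  (∑' η : (Λ → ℤ), f η * weight p β Λ φ η) / (∑' η : (Λ → ℤ), weight p β Λ φ η)

/-- The floor event `{η : η_x ≥ 0 for all x ∈ Λ}`. -/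
def floorSet (Λ : Finset Site) : Set (Λ → ℤ) := {η | ∀ x, 0 ≤ η x}

/-- The event `{η : 0 ≤ η_x ≤ n for all x ∈ Λ}` (floor at `0`, ceiling at `n`). -/
def boxSet (Λ : Finset Site) (n : ℕ) : Set (Λ → ℤ) :=
  {η | ∀ x, 0 ≤ η x ∧ η x ≤ (n : ℤ)}

/-- `barπ^{p,0}_Λ`: the Gibbs measure with zero boundary condition conditioned
on the floor event. -/
def barGibbs (p β : ℝ) (Λ : Finset Site) (A : Set (Λ → ℤ)) : ℝ :=
  gibbs p β Λ 0 (A ∩ floorSet Λ) / gibbs p β Λ 0 (floorSet Λ)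

/-- `π^{p,0}_Λ`: the Gibbs measure with zero boundary condition conditioned on
having floor at `0` and ceiling at `n`. -/
def ceilGibbs (p β : ℝ) (Λ : Finset Site) (n : ℕ) (A : Set (Λ → ℤ)) : ℝ :=
  gibbs p β Λ 0 (A ∩ boxSet Λ n) / gibbs p β Λ 0 (boxSet Λ n)

/-- The nearest-neighbour graph on `ℤ²`. -/
def nbrGraph : SimpleGraph Site where
  Adj x y := (x.1 - y.1).natAbs + (x.2 - y.2).natAbs = 1
  symm := ⟨by intro x y hxy; omega⟩
  loopless := ⟨by intro x h; omega⟩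

/-- The four nearest neighbours of a site. -/
def nbrs (x : Site) : Finset Site :=
  {(x.1 + 1, x.2), (x.1 - 1, x.2), (x.1, x.2 + 1), (x.1, x.2 - 1)}

/-- A contour `γ` of the dual lattice `(ℤ²)*`, identified with the finite region
`Λ_γ ⊆ ℤ²` of sites it encloses: the region is nonempty and connected with
connected complement, so that its edge boundary is a single closed dual circuit
(consistently with the standard linking rule at dual vertices). -/
structure Contour where
  interior : Finset Site
  nonempty : interior.Nonempty
  conn : (nbrGraph.induce (interior : Set Site)).Connected
  coconn : (nbrGraph.induce ((interior : Set Site)ᶜ)).Connected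

/-- The nearest-neighbour edges crossing the boundary of `S`, oriented from
inside to outside; these correspond to the bonds of the dual circuit bounding `S`. -/
def bdryEdges (S : Finset Site) : Finset (Site × Site) :=
  S.biUnion fun x => ((nbrs x).filter fun y => y ∉ S).image fun y => (x, y)

/-- `|γ|`: the number of bonds of the contour `γ`. -/
def Contour.len (γ : Contour) : ℕ := (bdryEdges γ.interior).card

/-- `∂⁺_γ`: sites of the interior adjacent to the exterior. -/
def innerBdry (S : Finset Site) : Finset Site :=
  S.filter fun x => ∃ y ∈ nbrs x, y ∉ S

/-- `∂⁻_γ`: sites of the exterior adjacent to the interior. -/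
def outerBdry (S : Finset Site) : Finset Site :=
  (S.biUnion nbrs).filter fun y => y ∉ S

/-- The event `C_{γ,h}` that `γ` is an `h`-contour: the extended configuration `ξ`
is at least `h` on `∂⁺_γ` and at most `h - 1` on `∂⁻_γ`. -/
def contourEvent (Λ : Finset Site) (φ : Site → ℤ) (γ : Contour) (h : ℤ) :
    Set (Λ → ℤ) :=
  {η | (∀ x ∈ innerBdry γ.interior, h ≤ extend Λ φ η x) ∧
       (∀ y ∈ outerBdry γ.interior, extend Λ φ η y ≤ h - 1)}

/-- The map `T_γ` lowering the configuration by `1` inside the contour `γ`. -/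
def lower (Λ : Finset Site) (γ : Contour) (η : Λ → ℤ) : Λ → ℤ :=
  fun x => if (x : Site) ∈ γ.interior then η x - 1 else η x

/-- An event is increasing if it is upward closed for the pointwise order. -/
def IncrEvent (Λ : Finset Site) (E : Set (Λ → ℤ)) : Prop :=
  ∀ η η' : Λ → ℤ, (∀ x, η x ≤ η' x) → η ∈ E → η' ∈ E


/-! ### Auxiliary lemmas -/

lemma mem_nbrs {x y : Site} : y ∈ nbrs x ↔
    y = (x.1 + 1, x.2) ∨ y = (x.1 - 1, x.2) ∨ y = (x.1, x.2 + 1) ∨ y = (x.1, x.2 - 1) := by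
  simp [nbrs]

lemma mem_edgesAt {x : Site} {e : Site × Site} : e ∈ edgesAt x ↔
    e = (x, (x.1 + 1, x.2)) ∨ e = (x, (x.1, x.2 + 1)) ∨
    e = ((x.1 - 1, x.2), x) ∨ e = ((x.1, x.2 - 1), x) := by
  simp [edgesAt]

lemma mem_bdryEdges {S : Finset Site} {e : Site × Site} :
    e ∈ bdryEdges S ↔ e.1 ∈ S ∧ e.2 ∈ nbrs e.1 ∧ e.2 ∉ S := by
  unfold bdryEdges
  simp only [Finset.mem_biUnion, Finset.mem_image, Finset.mem_filter]
  constructor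
  · rintro ⟨x, hx, y, ⟨hy, hyS⟩, rfl⟩; exact ⟨hx, hy, hyS⟩
  · rintro ⟨h1, h2, h3⟩; exact ⟨e.1, h1, e.2, ⟨h2, h3⟩, rfl⟩

/-- The normalized (right/up oriented) form of a nearest-neighbour edge. -/
def normEdge (x y : Site) : Site × Site :=
  if y = (x.1 + 1, x.2) ∨ y = (x.1, x.2 + 1) then (x, y) else (y, x)

lemma normEdge_cases (x y : Site) : normEdge x y = (x, y) ∨ normEdge x y = (y, x) := by
  unfold normEdge; split
  · exact Or.inl rfl
  · exact Or.inr rfl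

lemma normEdge_mem_edgesAt {x y : Site} (hy : y ∈ nbrs x) : normEdge x y ∈ edgesAt x := by
  rw [mem_nbrs] at hy
  rw [mem_edgesAt]
  unfold normEdge
  rcases hy with h | h | h | h <;> subst h
  · rw [if_pos (Or.inl rfl)]; tauto
  · have : ¬((x.1 - 1, x.2) = (x.1 + 1, x.2) ∨ (x.1 - 1, x.2) = (x.1, x.2 + 1)) := by
      simp [Prod.ext_iff]; omega
    rw [if_neg this]; tauto
  · rw [if_pos (Or.inr rfl)]; tauto
  · have : ¬((x.1, x.2 - 1) = (x.1 + 1, x.2) ∨ (x.1, x.2 - 1) = (x.1, x.2 + 1)) := by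
      simp [Prod.ext_iff]; omega
    rw [if_neg this]; tauto

lemma edges_nbr {Λ : Finset Site} {e : Site × Site} (he : e ∈ edges Λ) :
    e.2 ∈ nbrs e.1 ∧ e.1 ∈ nbrs e.2 := by
  obtain ⟨x, _, hex⟩ := Finset.mem_biUnion.1 he
  rw [mem_edgesAt] at hex
  rcases hex with h | h | h | h <;> subst h <;>
    constructor <;> rw [mem_nbrs] <;> simp [Prod.ext_iff] <;> omega

/-- The crossing predicate for edges relative to a region `S`. -/
def cross (S : Finset Site) (e : Site × Site) : Prop :=
  (e.1 ∈ S ∧ e.2 ∉ S) ∨ (e.1 ∉ S ∧ e.2 ∈ S)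

lemma len_le_card_cross (Λ : Finset Site) (γ : Contour) (hγ : γ.interior ⊆ Λ) :
    γ.len ≤ ((edges Λ).filter (cross γ.interior)).card := by
  apply Finset.card_le_card_of_injOn (fun e => normEdge e.1 e.2)
  · intro e he
    rw [Finset.mem_coe, mem_bdryEdges] at he
    obtain ⟨h1, h2, h3⟩ := he
    simp only [Finset.mem_coe, Finset.mem_filter]
    constructor
    · exact Finset.mem_biUnion.2 ⟨e.1, hγ h1, normEdge_mem_edgesAt h2⟩
    · rcases normEdge_cases e.1 e.2 with hc | hc <;> rw [hc]
      · exact Or.inl ⟨h1, h3⟩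
      · exact Or.inr ⟨h3, h1⟩
  · intro a ha b hb hab
    rw [Finset.mem_coe, mem_bdryEdges] at ha hb
    simp only at hab
    rcases normEdge_cases a.1 a.2 with h1 | h1 <;> rcases normEdge_cases b.1 b.2 with h2 | h2 <;>
      rw [h1, h2, Prod.mk.injEq] at hab
    · exact Prod.ext hab.1 hab.2
    · exact absurd (hab.1 ▸ ha.1) hb.2.2
    · exact absurd (hab.1 ▸ hb.1) ha.2.2
    · exact Prod.ext hab.2 hab.1

lemma rpow_add_one_le {p t : ℝ} (hp : 1 ≤ p) (ht : 1 ≤ t) : (t - 1) ^ p + 1 ≤ t ^ p := by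
  have h01 : (0 : ℝ) ≤ t - 1 := by linarith
  have key := NNReal.add_rpow_le_rpow_add ((t - 1).toNNReal) 1 hp
  have key' := NNReal.coe_le_coe.2 key
  rw [NNReal.coe_add, NNReal.coe_rpow, NNReal.coe_rpow, NNReal.coe_rpow, NNReal.coe_add,
    NNReal.coe_one, Real.coe_toNNReal _ h01] at key'
  simpa [Real.one_rpow] using key'

lemma term_step {p a b : ℝ} (hp : 1 ≤ p) (ha : 1 ≤ |a|) (hb : |b| = |a| - 1) :
    |b| ^ p + 1 ≤ |a| ^ p := by
  rw [hb]
  exact rpow_add_one_le hp ha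

lemma extend_lower (Λ : Finset Site) (γ : Contour) (hγ : γ.interior ⊆ Λ) (η : Λ → ℤ) (x : Site) :
    extend Λ 0 (lower Λ γ η) x =
      if x ∈ γ.interior then extend Λ 0 η x - 1 else extend Λ 0 η x := by
  unfold extend lower
  by_cases hx : x ∈ Λ
  · simp only [dif_pos hx]
  · have hxi : x ∉ γ.interior := fun hint => hx (hγ hint)
    simp only [dif_neg hx, if_neg hxi]

lemma lower_inj (Λ : Finset Site) (γ : Contour) : Function.Injective (lower Λ γ) := by
  intro a b hab
  funext x
  have hx := congrFun hab x
  unfold lower at hx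
  split at hx <;> omega

lemma ham_drop (p : ℝ) (hp : 1 ≤ p) (Λ : Finset Site) (γ : Contour)
    (hγ : γ.interior ⊆ Λ) (h : ℤ) (η : Λ → ℤ) (hη : η ∈ contourEvent Λ 0 γ h) :
    ham p Λ 0 (lower Λ γ η) + (γ.len : ℝ) ≤ ham p Λ 0 η := by
  classical
  obtain ⟨hIn, hOut⟩ := hη
  set S := γ.interior with hS
  have hcross : (γ.len : ℝ) ≤ ∑ e ∈ edges Λ, (if cross S e then (1 : ℝ) else 0) := by
    rw [Finset.sum_boole]
    exact_mod_cast len_le_card_cross Λ γ hγ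
  have hperedge : ∀ e ∈ edges Λ,
      (|extend Λ 0 (lower Λ γ η) e.1 - extend Λ 0 (lower Λ γ η) e.2| : ℝ) ^ p
        + (if cross S e then (1 : ℝ) else 0)
      ≤ (|extend Λ 0 η e.1 - extend Λ 0 η e.2| : ℝ) ^ p := by
    intro e he
    rw [extend_lower Λ γ hγ η e.1, extend_lower Λ γ hγ η e.2]
    by_cases h1 : e.1 ∈ S <;> by_cases h2 : e.2 ∈ S
    · have hc : ¬ cross S e := by unfold cross; tauto
      rw [if_pos h1, if_pos h2, if_neg hc, add_zero]
      apply le_of_eq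
      congr 2
      push_cast
      ring
    · -- e.1 inside, e.2 outside : crossing edge
      have hc : cross S e := Or.inl ⟨h1, h2⟩
      rw [if_pos h1, if_neg h2, if_pos hc]
      have hin : h ≤ extend Λ 0 η e.1 := by
        refine hIn e.1 (Finset.mem_filter.2 ⟨h1, ⟨e.2, (edges_nbr he).1, h2⟩⟩)
      have hout : extend Λ 0 η e.2 ≤ h - 1 := by
        refine hOut e.2 (Finset.mem_filter.2 ⟨Finset.mem_biUnion.2 ⟨e.1, h1, (edges_nbr he).1⟩, h2⟩)
      have h1eq : ((extend Λ 0 η e.1 - 1 : ℤ) : ℝ) - ((extend Λ 0 η e.2 : ℤ) : ℝ)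
          = (((extend Λ 0 η e.1 : ℤ) : ℝ) - ((extend Λ 0 η e.2 : ℤ) : ℝ)) - 1 := by
        push_cast; ring
      rw [h1eq]
      set a : ℝ := ((extend Λ 0 η e.1 : ℤ) : ℝ) - ((extend Λ 0 η e.2 : ℤ) : ℝ) with ha
      have ha1 : (1 : ℝ) ≤ a := by
        have h' : (1 : ℤ) ≤ extend Λ 0 η e.1 - extend Λ 0 η e.2 := by omega
        rw [ha]; exact_mod_cast h'
      have habs : |a| = a := abs_of_nonneg (by linarith)
      have ha1' : (1 : ℝ) ≤ |a| := by rw [habs]; exact ha1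
      have hbabs : |(a - 1 : ℝ)| = |a| - 1 := by
        rw [habs, abs_of_nonneg (by linarith : (0:ℝ) ≤ a - 1)]
      exact term_step hp ha1' hbabs
    · -- e.1 outside, e.2 inside : crossing edge
      have hc : cross S e := Or.inr ⟨h1, h2⟩
      rw [if_neg h1, if_pos h2, if_pos hc]
      have hin : h ≤ extend Λ 0 η e.2 := by
        refine hIn e.2 (Finset.mem_filter.2 ⟨h2, ⟨e.1, (edges_nbr he).2, h1⟩⟩)
      have hout : extend Λ 0 η e.1 ≤ h - 1 := by
        refine hOut e.1 (Finset.mem_filter.2 ⟨Finset.mem_biUnion.2 ⟨e.2, h2, (edges_nbr he).2⟩, h1⟩)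
      have h1eq : ((extend Λ 0 η e.1 : ℤ) : ℝ) - ((extend Λ 0 η e.2 - 1 : ℤ) : ℝ)
          = (((extend Λ 0 η e.1 : ℤ) : ℝ) - ((extend Λ 0 η e.2 : ℤ) : ℝ)) + 1 := by
        push_cast; ring
      rw [h1eq]
      set a : ℝ := ((extend Λ 0 η e.1 : ℤ) : ℝ) - ((extend Λ 0 η e.2 : ℤ) : ℝ) with ha
      have ha1 : a ≤ -1 := by
        have h' : extend Λ 0 η e.1 - extend Λ 0 η e.2 ≤ (-1 : ℤ) := by omega
        rw [ha]; exact_mod_cast h'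
      have habs : |a| = -a := abs_of_nonpos (by linarith)
      have ha1' : (1 : ℝ) ≤ |a| := by rw [habs]; linarith
      have hbabs : |(a + 1 : ℝ)| = |a| - 1 := by
        rw [habs, abs_of_nonpos (by linarith : (a + 1 : ℝ) ≤ 0)]; ring
      exact term_step hp ha1' hbabs
    · have hc : ¬ cross S e := by unfold cross; tauto
      rw [if_neg h1, if_neg h2, if_neg hc]
      simp
  calc ham p Λ 0 (lower Λ γ η) + (γ.len : ℝ)
      ≤ ham p Λ 0 (lower Λ γ η) + ∑ e ∈ edges Λ, (if cross S e then (1 : ℝ) else 0) := by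
        linarith
    _ = ∑ e ∈ edges Λ,
          ((|extend Λ 0 (lower Λ γ η) e.1 - extend Λ 0 (lower Λ γ η) e.2| : ℝ) ^ p
            + (if cross S e then (1 : ℝ) else 0)) := by
        rw [ham, Finset.sum_add_distrib]
    _ ≤ ∑ e ∈ edges Λ, (|extend Λ 0 η e.1 - extend Λ 0 η e.2| : ℝ) ^ p :=
        Finset.sum_le_sum hperedge
    _ = ham p Λ 0 η := rfl

/-- Peierls bound, no floor: for every `p ≥ 1`, `β > 0`, every
finite `Λ ⊆ ℤ²`, every contour `γ` with `Λ_γ ⊆ Λ` and every `h ∈ ℤ`, the `p`-SOS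
Gibbs measure with zero boundary condition and no floor satisfies
`hatπ^{p,0}_Λ(C_{γ,h}) ≤ exp(-β|γ|)`. -/
theorem statement_1 (p β : ℝ) (hp : 1 ≤ p) (hβ : 0 < β)
    (Λ : Finset Site) (γ : Contour) (hγ : γ.interior ⊆ Λ) (h : ℤ) :
    gibbs p β Λ 0 (contourEvent Λ 0 γ h) ≤ Real.exp (-β * (γ.len : ℝ)) := by
  classical
  set W : (Λ → ℤ) → ℝ := weight p β Λ 0 with hW
  by_cases hs : Summable W
  · have hZpos : 0 < ∑' η, W η :=
      Summable.tsum_pos hs (fun η => (Real.exp_pos _).le) (fun _ => 0) (Real.exp_pos _)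
    have hnum : (∑' η : contourEvent Λ 0 γ h, W η)
        ≤ Real.exp (-β * (γ.len : ℝ)) * ∑' η, W η := by
      rw [← tsum_mul_left]
      refine Summable.tsum_le_tsum_of_inj (fun η => lower Λ γ η.1)
        ((lower_inj Λ γ).comp Subtype.val_injective)
        (fun c _ => mul_nonneg (Real.exp_pos _).le (Real.exp_pos _).le) ?_ (hs.subtype _) (hs.mul_left _)
      rintro ⟨η, hη⟩
      show W η ≤ Real.exp (-β * (γ.len : ℝ)) * W (lower Λ γ η)
      rw [hW]
      unfold weight
      rw [← Real.exp_add]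
      apply Real.exp_le_exp.2
      have hdrop := ham_drop p hp Λ γ hγ h η hη
      nlinarith [mul_le_mul_of_nonneg_left hdrop hβ.le]
    rw [gibbs, div_le_iff₀ hZpos]
    exact hnum
  · rw [gibbs, tsum_eq_zero_of_not_summable hs, div_zero]
    positivity

end PSOS
end
end

section
/- Let (X_t)_{t≥0} be a discrete-time Markov chain on a finite state space Ω with transition matrix P reversible with respect to a probability measure π with π(η) > 0 for all η ∈ Ω. Let A ⊆ Ω with π(A) > 0, let ∂A = {η ∈ A : P(η,η′) > 0 for some η′ ∉ A} be the internal boundary of A, and let ν = π(· | A). Then for every B ⊆ Ω and every T ∈ ℕ, the chain started from ν satisfies P_ν(τ_B ≤ T) ≤ (T+1) (ν(∂A) + ν(B)), where τ_B = min{t ≥ 0 : X_t ∈ B} is the hitting time of B. -/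
open scoped BigOperators Classical

noncomputable section

namespace MarkovHitting

variable {Ω : Type*} [Fintype Ω]

/-- The mass a (sub)probability vector `ν` gives to a set `S`. -/
def meas (ν : Ω → ℝ) (S : Set Ω) : ℝ := ∑ x, if x ∈ S then ν x else 0

/-- The conditioned distribution `π(· | A)`. -/
def condDist (π : Ω → ℝ) (A : Set Ω) : Ω → ℝ :=
  fun x => if x ∈ A then π x / meas π A else 0

/-- The internal boundary `∂A = {x ∈ A : P(x,y) > 0 for some y ∉ A}`. -/
def intBdry (P : Ω → Ω → ℝ) (A : Set Ω) : Set Ω :=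
  {x ∈ A | ∃ y, y ∉ A ∧ 0 < P x y}

/-- `P_ν(τ_B ≤ T)`: the probability that the chain with transition matrix `P` and
initial law `ν` visits `B` at some time `t` with `0 ≤ t ≤ T`, written as a sum
over trajectories `ω : Fin (T+1) → Ω`. -/
def hitProb (ν : Ω → ℝ) (P : Ω → Ω → ℝ) (B : Set Ω) (T : ℕ) : ℝ :=
  ∑ ω : Fin (T + 1) → Ω,
    if ∃ t, ω t ∈ B then
      ν (ω 0) * ∏ i : Fin T, P (ω i.castSucc) (ω i.succ)
    else 0


lemma path_sum_cons (T : ℕ) (f : (Fin (T + 2) → Ω) → ℝ) :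
    ∑ ω : Fin (T + 2) → Ω, f ω = ∑ x : Ω, ∑ ω' : Fin (T + 1) → Ω, f (Fin.cons x ω' : Fin (T+2) → Ω) := by
  rw [← (Fin.consEquiv (fun _ : Fin (T+2) => Ω)).sum_comp f]
  rw [Fintype.sum_prod_type]
  rfl

lemma prod_cons (T : ℕ) (P : Ω → Ω → ℝ) (x : Ω) (ω' : Fin (T + 1) → Ω) :
    (∏ i : Fin (T + 1), P ((Fin.cons x ω' : Fin (T+2) → Ω) i.castSucc) ((Fin.cons x ω' : Fin (T+2) → Ω) i.succ))
      = P x (ω' 0) * ∏ i : Fin T, P (ω' i.castSucc) (ω' i.succ) := by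
  rw [Fin.prod_univ_succ]
  congr 1

lemma mass_sum (P : Ω → Ω → ℝ) (hProw : ∀ x, ∑ y, P x y = 1) :
    ∀ (T : ℕ) (ν : Ω → ℝ),
      (∑ ω : Fin (T + 1) → Ω, ν (ω 0) * ∏ i : Fin T, P (ω i.castSucc) (ω i.succ))
        = ∑ x, ν x := by
  intro T
  induction T with
  | zero =>
      intro ν
      simp only [Fin.prod_univ_zero, mul_one]
      exact Fintype.sum_equiv (Equiv.funUnique (Fin 1) Ω) _ _ (fun ω => rfl)
  | succ T ih =>
      intro ν
      rw [path_sum_cons T]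
      have : ∀ x : Ω, ∑ ω' : Fin (T + 1) → Ω,
          ν ((Fin.cons x ω' : Fin (T+2) → Ω) 0) * ∏ i : Fin (T+1), P ((Fin.cons x ω' : Fin (T+2) → Ω) i.castSucc) ((Fin.cons x ω' : Fin (T+2) → Ω) i.succ)
          = ν x := by
        intro x
        have h1 : ∀ ω' : Fin (T + 1) → Ω,
            ν ((Fin.cons x ω' : Fin (T+2) → Ω) 0) * ∏ i : Fin (T+1), P ((Fin.cons x ω' : Fin (T+2) → Ω) i.castSucc) ((Fin.cons x ω' : Fin (T+2) → Ω) i.succ)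
            = (fun y => ν x * P x y) (ω' 0) * ∏ i : Fin T, P (ω' i.castSucc) (ω' i.succ) := by
          intro ω'
          rw [prod_cons, Fin.cons_zero]
          ring
        rw [Finset.sum_congr rfl (fun ω' _ => h1 ω'), ih (fun y => ν x * P x y)]
        rw [← Finset.mul_sum, hProw, mul_one]
      rw [Finset.sum_congr rfl (fun x _ => this x)]

lemma onestep_bound (π : Ω → ℝ) (A S : Set Ω) (hπ : ∀ x, 0 ≤ π x)
    (hA : 0 < meas π A) (ν : Ω → ℝ)
    (hdom : ∀ x, ν x * meas π A ≤ (if x ∈ A then π x else 0)) :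
    ∑ x, (if x ∈ A ∧ x ∈ S then ν x else 0) ≤ meas π S / meas π A := by
  rw [meas, Finset.sum_div]
  apply Finset.sum_le_sum
  intro x _
  by_cases hS : x ∈ S
  · by_cases hxA : x ∈ A
    · rw [if_pos ⟨hxA, hS⟩, if_pos hS, le_div_iff₀ hA]
      have := hdom x; rwa [if_pos hxA] at this
    · rw [if_neg (fun h => hxA h.1), if_pos hS]
      exact div_nonneg (hπ x) hA.le
  · rw [if_neg (fun h => hS h.2), if_neg hS]
    simp

lemma key (P : Ω → Ω → ℝ) (π : Ω → ℝ) (hPnn : ∀ x y, 0 ≤ P x y)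
    (hProw : ∀ x, ∑ y, P x y = 1) (hπ : ∀ x, 0 ≤ π x)
    (hrev : ∀ x y, π x * P x y = π y * P y x)
    (A S : Set Ω) (hA : 0 < meas π A) :
    ∀ (T : ℕ) (t : Fin (T+1)) (ν : Ω → ℝ),
      (∀ x, ν x * meas π A ≤ (if x ∈ A then π x else 0)) →
      (∑ ω : Fin (T + 1) → Ω,
        if (∀ s, s ≤ t → ω s ∈ A) ∧ ω t ∈ S then
          ν (ω 0) * ∏ i : Fin T, P (ω i.castSucc) (ω i.succ) else 0)
        ≤ meas π S / meas π A := by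
  intro T
  induction T with
  | zero =>
      intro t ν hdom
      have ht : t = 0 := Fin.ext (by omega)
      subst ht
      have heq : (∑ ω : Fin 1 → Ω,
          if (∀ s, s ≤ (0 : Fin 1) → ω s ∈ A) ∧ ω 0 ∈ S then
            ν (ω 0) * ∏ i : Fin 0, P (ω i.castSucc) (ω i.succ) else 0)
          = ∑ x, (if x ∈ A ∧ x ∈ S then ν x else 0) := by
        apply Fintype.sum_equiv (Equiv.funUnique (Fin 1) Ω)
        intro ω
        rw [Fin.prod_univ_zero, mul_one]
        have hiff : ((∀ s, s ≤ (0 : Fin 1) → ω s ∈ A) ∧ ω 0 ∈ S) ↔ (ω 0 ∈ A ∧ ω 0 ∈ S) := by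
          constructor
          · rintro ⟨h1, h2⟩; exact ⟨h1 0 le_rfl, h2⟩
          · rintro ⟨h1, h2⟩
            refine ⟨fun s _ => ?_, h2⟩
            have hs : s = 0 := Fin.ext (by omega)
            rw [hs]; exact h1
        rw [if_congr hiff rfl rfl]
        rfl
      rw [heq]
      exact onestep_bound π A S hπ hA ν hdom
  | succ T ih =>
      intro t ν hdom
      induction t using Fin.cases with
      | zero =>
          have heq : (∑ ω : Fin (T+2) → Ω,
              if (∀ s, s ≤ (0 : Fin (T+2)) → ω s ∈ A) ∧ ω 0 ∈ S then
                ν (ω 0) * ∏ i : Fin (T+1), P (ω i.castSucc) (ω i.succ) else 0)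
              = ∑ x, (if x ∈ A ∧ x ∈ S then ν x else 0) := by
            have h1 : ∀ ω : Fin (T+2) → Ω,
                (if (∀ s, s ≤ (0 : Fin (T+2)) → ω s ∈ A) ∧ ω 0 ∈ S then
                  ν (ω 0) * ∏ i : Fin (T+1), P (ω i.castSucc) (ω i.succ) else 0)
                = (fun y => if y ∈ A ∧ y ∈ S then ν y else 0) (ω 0)
                    * ∏ i : Fin (T+1), P (ω i.castSucc) (ω i.succ) := by
              intro ω
              have hiff : ((∀ s, s ≤ (0 : Fin (T+2)) → ω s ∈ A) ∧ ω 0 ∈ S)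
                  ↔ (ω 0 ∈ A ∧ ω 0 ∈ S) := by
                constructor
                · rintro ⟨h1, h2⟩; exact ⟨h1 0 le_rfl, h2⟩
                · rintro ⟨h1, h2⟩
                  refine ⟨fun s hs => ?_, h2⟩
                  have hs0 : s = 0 := le_antisymm hs (Fin.zero_le s)
                  rw [hs0]; exact h1
              rw [if_congr hiff rfl rfl, ite_mul, zero_mul]
            rw [Finset.sum_congr rfl (fun ω _ => h1 ω)]
            exact mass_sum P hProw (T+1) (fun y => if y ∈ A ∧ y ∈ S then ν y else 0)
          rw [heq]
          exact onestep_bound π A S hπ hA ν hdom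
      | succ j =>
          rw [path_sum_cons T]
          -- rewrite each inner summand
          have h2 : ∀ (x : Ω) (ω' : Fin (T+1) → Ω),
              (if (∀ s, s ≤ j.succ → (Fin.cons x ω' : Fin (T+2) → Ω) s ∈ A)
                  ∧ (Fin.cons x ω' : Fin (T+2) → Ω) j.succ ∈ S then
                ν ((Fin.cons x ω' : Fin (T+2) → Ω) 0)
                  * ∏ i : Fin (T+1), P ((Fin.cons x ω' : Fin (T+2) → Ω) i.castSucc)
                      ((Fin.cons x ω' : Fin (T+2) → Ω) i.succ) else 0)
              = if (∀ s, s ≤ j → ω' s ∈ A) ∧ ω' j ∈ S then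
                  (if x ∈ A then ν x * P x (ω' 0) else 0)
                    * ∏ i : Fin T, P (ω' i.castSucc) (ω' i.succ) else 0 := by
            intro x ω'
            have hiff : ((∀ s, s ≤ j.succ → (Fin.cons x ω' : Fin (T+2) → Ω) s ∈ A)
                  ∧ (Fin.cons x ω' : Fin (T+2) → Ω) j.succ ∈ S)
                ↔ (x ∈ A ∧ ((∀ s, s ≤ j → ω' s ∈ A) ∧ ω' j ∈ S)) := by
              rw [Fin.cons_succ]
              constructor
              · rintro ⟨h1, h2⟩
                refine ⟨?_, fun s hs => ?_, h2⟩
                · have := h1 0 (Fin.zero_le _); rwa [Fin.cons_zero] at this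
                · have := h1 s.succ (by rwa [Fin.succ_le_succ_iff])
                  rwa [Fin.cons_succ] at this
              · rintro ⟨hx, h1, h2⟩
                refine ⟨fun s hs => ?_, h2⟩
                induction s using Fin.cases with
                | zero => rwa [Fin.cons_zero]
                | succ u =>
                    rw [Fin.cons_succ]
                    exact h1 u (by rwa [Fin.succ_le_succ_iff] at hs)
            rw [if_congr hiff rfl rfl, prod_cons, Fin.cons_zero]
            by_cases hc : (∀ s, s ≤ j → ω' s ∈ A) ∧ ω' j ∈ S
            · by_cases hx : x ∈ A
              · rw [if_pos ⟨hx, hc⟩, if_pos hc, if_pos hx]; ring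
              · rw [if_neg (fun h => hx h.1), if_pos hc, if_neg hx, zero_mul]
            · rw [if_neg (fun h => hc h.2), if_neg hc]
          rw [Finset.sum_congr rfl (fun x _ =>
            Finset.sum_congr rfl (fun ω' _ => h2 x ω'))]
          rw [Finset.sum_comm]
          -- now collapse the x-sum
          set ν₁ : Ω → ℝ := fun y => if y ∈ A then (∑ x, if x ∈ A then ν x * P x y else 0) else 0
            with hν₁
          have h3 : ∀ ω' : Fin (T+1) → Ω,
              (∑ x, if (∀ s, s ≤ j → ω' s ∈ A) ∧ ω' j ∈ S then
                  (if x ∈ A then ν x * P x (ω' 0) else 0)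
                    * ∏ i : Fin T, P (ω' i.castSucc) (ω' i.succ) else 0)
              = if (∀ s, s ≤ j → ω' s ∈ A) ∧ ω' j ∈ S then
                  ν₁ (ω' 0) * ∏ i : Fin T, P (ω' i.castSucc) (ω' i.succ) else 0 := by
            intro ω'
            by_cases hc : (∀ s, s ≤ j → ω' s ∈ A) ∧ ω' j ∈ S
            · simp only [if_pos hc]
              rw [← Finset.sum_mul]
              congr 1
              rw [hν₁]
              simp only
              rw [if_pos (hc.1 0 (Fin.zero_le _))]
            · simp only [if_neg hc, Finset.sum_const_zero]
          rw [Finset.sum_congr rfl (fun ω' _ => h3 ω')]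
          apply ih j ν₁
          -- domination for ν₁
          intro y
          by_cases hy : y ∈ A
          · rw [if_pos hy, hν₁]
            simp only [if_pos hy]
            rw [Finset.sum_mul]
            calc (∑ x, (if x ∈ A then ν x * P x y else 0) * meas π A)
                ≤ ∑ x, (if x ∈ A then π y * P y x else 0) := by
                  apply Finset.sum_le_sum
                  intro x _
                  by_cases hx : x ∈ A
                  · rw [if_pos hx, if_pos hx, ← hrev]
                    have := hdom x; rw [if_pos hx] at this
                    calc ν x * P x y * meas π A
                        = (ν x * meas π A) * P x y := by ring
                      _ ≤ π x * P x y := mul_le_mul_of_nonneg_right this (hPnn x y)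
                  · rw [if_neg hx, if_neg hx, zero_mul]
              _ ≤ ∑ x, π y * P y x := by
                  apply Finset.sum_le_sum
                  intro x _
                  by_cases hx : x ∈ A
                  · rw [if_pos hx]
                  · rw [if_neg hx]; exact mul_nonneg (hπ y) (hPnn y x)
              _ = π y := by rw [← Finset.mul_sum, hProw, mul_one]
          · rw [if_neg hy, hν₁]
            simp only [if_neg hy, zero_mul, le_refl]


lemma covering (P : Ω → Ω → ℝ) (A B : Set Ω) (T : ℕ) (ω : Fin (T+1) → Ω)
    (h0 : ω 0 ∈ A) (hpos : ∀ i : Fin T, 0 < P (ω i.castSucc) (ω i.succ))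
    (hB : ∃ t, ω t ∈ B) :
    ∃ t : Fin (T+1), (∀ s, s ≤ t → ω s ∈ A) ∧ ω t ∈ (B ∩ A) ∪ intBdry P A := by
  set S : Set Ω := (B ∩ A) ∪ intBdry P A with hS
  have hSA : S ⊆ A := by
    rintro x (hx | hx)
    · exact hx.2
    · exact hx.1
  set F : Finset (Fin (T+1)) := Finset.univ.filter (fun t => ω t ∉ A ∨ ω t ∈ S) with hF
  have hne : F.Nonempty := by
    obtain ⟨tB, htB⟩ := hB
    by_cases hall : ∀ s, s ≤ tB → ω s ∈ A
    · refine ⟨tB, Finset.mem_filter.mpr ⟨Finset.mem_univ tB, ?_⟩⟩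
      exact Or.inr (Or.inl ⟨htB, hall tB le_rfl⟩)
    · push_neg at hall
      obtain ⟨s, _, hs⟩ := hall
      exact ⟨s, Finset.mem_filter.mpr ⟨Finset.mem_univ s, Or.inl hs⟩⟩
  set t₀ := F.min' hne with ht₀
  have ht₀F : t₀ ∈ F := F.min'_mem hne
  have hmin : ∀ s, s < t₀ → ω s ∈ A ∧ ω s ∉ S := by
    intro s hs
    by_contra hcon
    have hsF : s ∈ F := Finset.mem_filter.mpr ⟨Finset.mem_univ s, by by_contra hc; push_neg at hc; exact hcon ⟨hc.1, hc.2⟩⟩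
    exact absurd (F.min'_le s hsF) (not_le.mpr hs)
  have ht₀' : ω t₀ ∉ A ∨ ω t₀ ∈ S := (Finset.mem_filter.mp ht₀F).2
  have htS : ω t₀ ∈ S := by
    rcases ht₀' with h | h
    · exfalso
      have ht0 : t₀ ≠ 0 := fun he => h (he ▸ h0)
      obtain ⟨i, hi⟩ : ∃ i : Fin T, t₀ = i.succ := Fin.eq_succ_of_ne_zero ht0
      have hlt : i.castSucc < t₀ := hi ▸ (Fin.castSucc_lt_succ : i.castSucc < i.succ)
      obtain ⟨hA1, hS1⟩ := hmin i.castSucc hlt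
      apply hS1
      right
      refine ⟨hA1, ω t₀, h, ?_⟩
      have := hpos i
      rwa [hi]
    · exact h
  refine ⟨t₀, fun s hs => ?_, htS⟩
  rcases lt_or_eq_of_le hs with h | h
  · exact (hmin s h).1
  · rw [h]; exact hSA htS

/-- let `P` be a stochastic matrix on a finite state space `Ω`,
reversible with respect to an everywhere-positive probability measure `π`. Let
`A ⊆ Ω` with `π(A) > 0`, let `∂A` be its internal boundary and `ν = π(· | A)`.
Then for every `B ⊆ Ω` and `T ∈ ℕ`, the chain started from `ν` satisfies
`P_ν(τ_B ≤ T) ≤ (T+1)(ν(∂A) + ν(B))`, where `τ_B` is the hitting time of `B`. -/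
theorem statement_18
    (P : Ω → Ω → ℝ) (π : Ω → ℝ)
    (hPnn : ∀ x y, 0 ≤ P x y) (hProw : ∀ x, ∑ y, P x y = 1)
    (hπpos : ∀ x, 0 < π x) (hπsum : ∑ x, π x = 1)
    (hrev : ∀ x y, π x * P x y = π y * P y x)
    (A B : Set Ω) (hA : 0 < meas π A) (T : ℕ) :
    hitProb (condDist π A) P B T ≤
      ((T : ℝ) + 1) *
        (meas (condDist π A) (intBdry P A) + meas (condDist π A) B) := by
  set ν := condDist π A with hν
  set S : Set Ω := (B ∩ A) ∪ intBdry P A with hSdef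
  have hνnn : ∀ x, 0 ≤ ν x := by
    intro x
    rw [hν, condDist]
    by_cases h : x ∈ A
    · rw [if_pos h]; exact div_nonneg (hπpos x).le hA.le
    · rw [if_neg h]
  have hdom : ∀ x, ν x * meas π A ≤ (if x ∈ A then π x else 0) := by
    intro x
    rw [hν, condDist]
    by_cases h : x ∈ A
    · rw [if_pos h, if_pos h, div_mul_cancel₀ _ (ne_of_gt hA)]
    · rw [if_neg h, if_neg h, zero_mul]
  have hwnn : ∀ ω : Fin (T+1) → Ω,
      0 ≤ ν (ω 0) * ∏ i : Fin T, P (ω i.castSucc) (ω i.succ) :=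
    fun ω => mul_nonneg (hνnn _) (Finset.prod_nonneg fun i _ => hPnn _ _)
  -- Step 1: union bound
  have step1 : hitProb ν P B T ≤
      ∑ t : Fin (T+1), ∑ ω : Fin (T+1) → Ω,
        (if (∀ s, s ≤ t → ω s ∈ A) ∧ ω t ∈ S then
          ν (ω 0) * ∏ i : Fin T, P (ω i.castSucc) (ω i.succ) else 0) := by
    rw [hitProb, Finset.sum_comm]
    apply Finset.sum_le_sum
    intro ω _
    set w := ν (ω 0) * ∏ i : Fin T, P (ω i.castSucc) (ω i.succ) with hw
    have hrhs_nn : ∀ t : Fin (T+1),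
        0 ≤ (if (∀ s, s ≤ t → ω s ∈ A) ∧ ω t ∈ S then w else 0) := by
      intro t
      by_cases h : (∀ s, s ≤ t → ω s ∈ A) ∧ ω t ∈ S
      · rw [if_pos h]; exact hwnn ω
      · rw [if_neg h]
    by_cases hhit : ∃ t, ω t ∈ B
    · rw [if_pos hhit]
      rcases eq_or_lt_of_le (hwnn ω) with heq | hpos
      · calc w = 0 := heq.symm
          _ ≤ _ := Finset.sum_nonneg (fun t _ => hrhs_nn t)
      · have hν0 : 0 < ν (ω 0) := by
          rcases mul_pos_iff.mp hpos with ⟨h1, _⟩ | ⟨h1, _⟩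
          · exact h1
          · exact absurd h1 (not_lt.mpr (hνnn _))
        have hprodpos : 0 < ∏ i : Fin T, P (ω i.castSucc) (ω i.succ) := by
          rcases mul_pos_iff.mp hpos with ⟨_, h2⟩ | ⟨h1, _⟩
          · exact h2
          · exact absurd h1 (not_lt.mpr (hνnn _))
        have hPpos : ∀ i : Fin T, 0 < P (ω i.castSucc) (ω i.succ) := by
          intro i
          rcases eq_or_lt_of_le (hPnn (ω i.castSucc) (ω i.succ)) with h | h
          · exfalso
            have : (∏ i : Fin T, P (ω i.castSucc) (ω i.succ)) = 0 :=
              Finset.prod_eq_zero (Finset.mem_univ i) h.symm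
            rw [this] at hprodpos; exact lt_irrefl 0 hprodpos
          · exact h
        have h0A : ω 0 ∈ A := by
          by_contra h
          rw [hν, condDist, if_neg h] at hν0
          exact lt_irrefl 0 hν0
        obtain ⟨t₀, ht₀⟩ := covering P A B T ω h0A hPpos hhit
        calc w = (if (∀ s, s ≤ t₀ → ω s ∈ A) ∧ ω t₀ ∈ S then w else 0) := by
              rw [if_pos ht₀]
          _ ≤ ∑ t : Fin (T+1), (if (∀ s, s ≤ t → ω s ∈ A) ∧ ω t ∈ S then w else 0) :=
              Finset.single_le_sum (fun t _ => hrhs_nn t) (Finset.mem_univ t₀)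
    · rw [if_neg hhit]
      exact Finset.sum_nonneg (fun t _ => hrhs_nn t)
  -- Step 2: each term bounded
  have step2 : (∑ t : Fin (T+1), ∑ ω : Fin (T+1) → Ω,
        (if (∀ s, s ≤ t → ω s ∈ A) ∧ ω t ∈ S then
          ν (ω 0) * ∏ i : Fin T, P (ω i.castSucc) (ω i.succ) else 0))
      ≤ ((T : ℝ) + 1) * (meas π S / meas π A) := by
    calc (∑ t : Fin (T+1), ∑ ω : Fin (T+1) → Ω,
          (if (∀ s, s ≤ t → ω s ∈ A) ∧ ω t ∈ S then
            ν (ω 0) * ∏ i : Fin T, P (ω i.castSucc) (ω i.succ) else 0))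
        ≤ ∑ _t : Fin (T+1), meas π S / meas π A := by
          apply Finset.sum_le_sum
          intro t _
          refine le_trans (le_of_eq ?_)
            (key P π hPnn hProw (fun x => (hπpos x).le) hrev A S hA T t ν hdom)
          exact Finset.sum_congr rfl (fun ω _ => by congr 1)
      _ = ((T : ℝ) + 1) * (meas π S / meas π A) := by
          rw [Finset.sum_const, Finset.card_univ, Fintype.card_fin, nsmul_eq_mul]
          push_cast
          ring
  -- Step 3: meas π S / meas π A = meas ν S ≤ meas ν ∂A + meas ν B
  have step3 : meas π S / meas π A ≤ meas ν (intBdry P A) + meas ν B := by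
    have hSA : S ⊆ A := by
      rintro x (hx | hx)
      · exact hx.2
      · exact hx.1
    have heq : meas π S / meas π A = meas ν S := by
      rw [meas, meas, Finset.sum_div]
      apply Finset.sum_congr rfl
      intro x _
      by_cases h : x ∈ S
      · rw [if_pos h, if_pos h, hν, condDist, if_pos (hSA h), meas]
      · rw [if_neg h, if_neg h, zero_div]
    rw [heq, meas, meas, meas, ← Finset.sum_add_distrib]
    apply Finset.sum_le_sum
    intro x _
    by_cases h : x ∈ S
    · rw [if_pos h]
      rcases h with h | h
      · calc ν x ≤ 0 + ν x := by rw [zero_add]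
          _ ≤ _ := by
            apply add_le_add
            · by_cases hb : x ∈ intBdry P A
              · rw [if_pos hb]; exact hνnn x
              · rw [if_neg hb]
            · rw [if_pos h.1]
      · calc ν x ≤ ν x + 0 := by rw [add_zero]
          _ ≤ _ := by
            apply add_le_add
            · rw [if_pos h]
            · by_cases hb : x ∈ B
              · rw [if_pos hb]; exact hνnn x
              · rw [if_neg hb]
    · rw [if_neg h]
      apply add_nonneg
      · by_cases hb : x ∈ intBdry P A
        · rw [if_pos hb]; exact hνnn x
        · rw [if_neg hb]
      · by_cases hb : x ∈ B
        · rw [if_pos hb]; exact hνnn x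
        · rw [if_neg hb]
  calc hitProb ν P B T ≤ ((T : ℝ) + 1) * (meas π S / meas π A) := le_trans step1 step2
    _ ≤ ((T : ℝ) + 1) * (meas ν (intBdry P A) + meas ν B) := by
        apply mul_le_mul_of_nonneg_left step3
        positivity


end MarkovHitting
end
end
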